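/- Let 𝔳 = {ν_i}_{i∈I} be a totally ordered set in V with no maximal element such that at least one polynomial is not 𝔳-stable. Let Q be a monic polynomial of smallest degree d that is not 𝔳-stable, take γ ∈ Γ ∪ {∞} with γ > ν_i(Q) for every i ∈ I, and let μ be the valuation defined by μ(f_0 + f_1 Q + … + f_r Q^r) = min_{0≤j≤r} {𝔳(f_j) + jγ} on Q-expansions. Let R_Q be the additive subgroup of G_μ generated by {inv_μ(f) : deg(f) < d}. Then the direct limit lim→ G_{ν_i} of the direct system {(G_{ν_i}, φ_{ij})}_{i≤j} is isomorphic to R_Q as commutative rings with unity. -/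

import Mathlib

open Polynomial

/-- An additive valuation (possibly with nontrivial support) on a commutative
ring `R`, with values in `Γ ∪ {∞}`. -/
structure ValOn (R : Type*) [CommRing R] (Γ : Type*) [AddCommGroup Γ] [LinearOrder Γ] [IsOrderedAddMonoid Γ] where
  v : R → WithTop Γ
  v_zero : v 0 = ⊤
  v_one : v 1 = 0
  v_mul : ∀ a b, v (a * b) = v a + v b
  min_le_v_add : ∀ a b, min (v a) (v b) ≤ v (a + b)

namespace ValOn

variable {R : Type*} [CommRing R] {Γ : Type*} [AddCommGroup Γ] [LinearOrder Γ] [IsOrderedAddMonoid Γ]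

theorem v_neg (w : ValOn R Γ) (a : R) : w.v (-a) = w.v a := by
  have h1 : w.v (-1) + w.v (-1) = 0 := by
    rw [← w.v_mul]; norm_num [w.v_one]
  have h2 : w.v (-1) = 0 := by
    cases hx : w.v (-1) with
    | top => rw [hx] at h1; simp at h1
    | coe x =>
        rw [hx, ← WithTop.coe_add, ← WithTop.coe_zero, WithTop.coe_inj] at h1
        have hx0 : x = 0 := by
          rcases lt_trichotomy x 0 with hc | hc | hc
          · exact absurd h1 (ne_of_lt (add_neg hc hc))
          · exact hc
          · exact absurd h1 (ne_of_gt (add_pos hc hc))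
        rw [hx0, WithTop.coe_zero]
  calc w.v (-a) = w.v (-1 * a) := by rw [neg_one_mul]
  _ = w.v a := by rw [w.v_mul, h2, zero_add]

theorem le_v_sum (w : ValOn R Γ) {α : Type*} {γ : WithTop Γ} (s : Finset α) (h : α → R)
    (H : ∀ t ∈ s, γ ≤ w.v (h t)) : γ ≤ w.v (∑ t ∈ s, h t) := by
  classical
  induction s using Finset.induction_on with
  | empty => simp [w.v_zero]
  | insert _ _ hx ih =>
      rw [Finset.sum_insert hx]
      refine le_trans ?_ (w.min_le_v_add _ _)
      rw [le_min_iff]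
      exact ⟨H _ (Finset.mem_insert_self _ _),
        ih fun t ht => H t (Finset.mem_insert_of_mem ht)⟩

theorem lt_v_sum (w : ValOn R Γ) {α : Type*} {γ : WithTop Γ} (hγ : γ ≠ ⊤) (s : Finset α)
    (h : α → R) (H : ∀ t ∈ s, γ < w.v (h t)) : γ < w.v (∑ t ∈ s, h t) := by
  classical
  induction s using Finset.induction_on with
  | empty => simp [w.v_zero]; exact lt_top_iff_ne_top.mpr hγ
  | insert _ _ hx ih =>
      rw [Finset.sum_insert hx]
      refine lt_of_lt_of_le ?_ (w.min_le_v_add _ _)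
      rw [lt_min_iff]
      exact ⟨H _ (Finset.mem_insert_self _ _),
        ih fun t ht => H t (Finset.mem_insert_of_mem ht)⟩

/-- The subring `⊕_{γ ∈ Γ} P_γ` of the monoid algebra `R[Γ]`, where
`P_γ = {f : γ ≤ v f}`.  The graded ring `G_v = ⊕_γ P_γ/P_γ⁺` is realized below as the
quotient of this subring by the ideal `⊕_γ P_γ⁺`. -/
def gradedCarrier (w : ValOn R Γ) : Subring (AddMonoidAlgebra R Γ) where
  carrier := {s | ∀ γ : Γ, (γ : WithTop Γ) ≤ w.v (s.coeff γ)}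
  zero_mem' := by intro γ; simp [w.v_zero]
  one_mem' := by
    intro γ
    classical
    show (γ : WithTop Γ) ≤ w.v ((AddMonoidAlgebra.single (0:Γ) (1:R)).coeff γ)
    rw [AddMonoidAlgebra.coeff_single_apply]
    split_ifs with h
    · subst h; simp [w.v_one]
    · simp [w.v_zero]
  add_mem' := by
    intro a b ha hb γ
    refine le_trans ?_ (w.min_le_v_add _ _)
    exact le_min (ha γ) (hb γ)
  neg_mem' := by
    intro a ha γ
    show (γ : WithTop Γ) ≤ w.v ((-a).coeff γ)
    rw [AddMonoidAlgebra.coeff_neg, Finsupp.neg_apply, w.v_neg]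
    exact ha γ
  mul_mem' := by
    classical
    intro a b ha hb γ
    rw [AddMonoidAlgebra.mul_apply]
    rw [Finsupp.sum]
    refine w.le_v_sum _ _ (fun α hα => ?_)
    rw [Finsupp.sum]
    refine w.le_v_sum _ _ (fun β hβ => ?_)
    split_ifs with h
    · subst h
      rw [w.v_mul, WithTop.coe_add]
      exact add_le_add (ha α) (hb β)
    · simp [w.v_zero]

/-- The ideal `⊕_{γ ∈ Γ} P_γ⁺` of `gradedCarrier w`. -/
def gradedIdeal (w : ValOn R Γ) : Ideal (gradedCarrier w) where
  carrier := {s | ∀ γ : Γ, (γ : WithTop Γ) < w.v ((s : AddMonoidAlgebra R Γ).coeff γ)}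
  zero_mem' := by intro γ; simp [w.v_zero]
  add_mem' := by
    intro a b ha hb γ
    refine lt_of_lt_of_le ?_ (w.min_le_v_add _ _)
    exact lt_min (ha γ) (hb γ)
  smul_mem' := by
    classical
    intro c x hx γ
    rw [smul_eq_mul]
    show (γ : WithTop Γ) < w.v (((c : AddMonoidAlgebra R Γ) * (x : AddMonoidAlgebra R Γ)).coeff γ)
    rw [AddMonoidAlgebra.mul_apply, Finsupp.sum]
    refine w.lt_v_sum (WithTop.coe_ne_top) _ _ (fun α hα => ?_)
    rw [Finsupp.sum]
    refine w.lt_v_sum (WithTop.coe_ne_top) _ _ (fun β hβ => ?_)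
    split_ifs with h
    · subst h
      rw [w.v_mul, WithTop.coe_add]
      exact WithTop.add_lt_add_of_le_of_lt WithTop.coe_ne_top (c.2 α) (hx β)
    · simp [w.v_zero]
end ValOn

/-- The graded ring `G_w = ⊕_{γ} P_γ/P_γ⁺` associated to the valuation `w`,
realized as a quotient. -/
abbrev Graded {R : Type*} [CommRing R] {Γ : Type*} [AddCommGroup Γ] [LinearOrder Γ] [IsOrderedAddMonoid Γ]
    (w : ValOn R Γ) : Type _ :=
  (ValOn.gradedCarrier w) ⧸ (ValOn.gradedIdeal w)

namespace ValOn

variable {R : Type*} [CommRing R] {Γ : Type*} [AddCommGroup Γ] [LinearOrder Γ] [IsOrderedAddMonoid Γ]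

/-- `inv_w f`, the initial form (image of `f` in the homogeneous component
`P_{v f}/P_{v f}⁺` of the graded ring), with `inv_w f = 0` when `f ∈ supp w`. -/
noncomputable def initialForm (w : ValOn R Γ) (f : R) : Graded w :=
  if h : w.v f = ⊤ then 0
  else Ideal.Quotient.mk (gradedIdeal w)
    ⟨AddMonoidAlgebra.single ((w.v f).untop h) f, by
      intro γ
      classical
      show (γ : WithTop Γ) ≤ w.v ((AddMonoidAlgebra.single ((w.v f).untop h) f).coeff γ)
      rw [AddMonoidAlgebra.coeff_single_apply]
      split_ifs with hh
      · rw [← hh, WithTop.coe_untop]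
      · simp [w.v_zero]⟩

theorem gradedCarrier_mono {w₁ w₂ : ValOn R Γ} (h : ∀ f, w₁.v f ≤ w₂.v f) :
    gradedCarrier w₁ ≤ gradedCarrier w₂ :=
  fun s hs γ => (hs γ).trans (h _)

/-- The homomorphism `φ : G_{w₁} → G_{w₂}` of graded rings, for `w₁ ≤ w₂`:
it sends `inv_{w₁} f` to `inv_{w₂} f` if `w₁ f = w₂ f` and to `0` if `w₁ f < w₂ f`. -/
noncomputable def phi (w₁ w₂ : ValOn R Γ) (h : ∀ f, w₁.v f ≤ w₂.v f) :
    Graded w₁ →+* Graded w₂ :=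
  Ideal.Quotient.lift (gradedIdeal w₁)
    ((Ideal.Quotient.mk (gradedIdeal w₂)).comp (Subring.inclusion (gradedCarrier_mono h)))
    (by
      intro a ha
      rw [RingHom.comp_apply, Ideal.Quotient.eq_zero_iff_mem]
      exact fun γ => lt_of_lt_of_le (ha γ) (h _))

end ValOn


open ValOn

section PolyDefs

variable {K : Type*} [Field K] {Γ : Type*} [AddCommGroup Γ] [LinearOrder Γ] [IsOrderedAddMonoid Γ]

/-- A polynomial `f` is `𝔳`-stable for a family `𝔳 = (ν_i)_{i ∈ I}` if the values `ν_i(f)`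
eventually stabilize. -/
def Stable {I : Type*} [Preorder I] (ν : I → ValOn (Polynomial K) Γ) (f : Polynomial K) : Prop :=
  ∃ i : I, ∀ j : I, i ≤ j → (ν j).v f = (ν i).v f

/-- The truncation `w_q` of `w` at `q`:
`w_q(f) = min_j w(f_j q^j)` where `f = ∑ f_j q^j` is the `q`-expansion of `f`
(for monic non-constant `q`, the `j`-th coefficient of the `q`-expansion is
`(f /ₘ q^j) %ₘ q`, and all the nonzero coefficients occur for `j ≤ natDegree f`). -/
noncomputable def truncVal (w : ValOn (Polynomial K) Γ) (q f : Polynomial K) : WithTop Γ :=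
  (Finset.range (f.natDegree + 1)).inf' Finset.nonempty_range_add_one
    (fun j => w.v (((f /ₘ q ^ j) %ₘ q) * q ^ j))

/-- `δ(f) = max {ν̄(x - a) : a a root of f}` for a polynomial over an algebraically closed
field, with the convention `δ(f) = ⊥ = -∞` when `f` has no roots (e.g. `deg f = 0`). -/
noncomputable def deltaOf {F : Type*} [Field F] (wbar : ValOn (Polynomial F) Γ)
    (f : Polynomial F) : WithBot (WithTop Γ) :=
  (f.roots.map (fun a => ((wbar.v (X - C a) : WithTop Γ) : WithBot (WithTop Γ)))).sup

/-- `δ(f)` of `f ∈ K[x]`, computed via the fixed extension `ν̄` of `ν` to `K̄[x]`. -/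
noncomputable def delta (wbar : ValOn (Polynomial (AlgebraicClosure K)) Γ)
    (f : Polynomial K) : WithBot (WithTop Γ) :=
  deltaOf wbar (f.map (algebraMap K (AlgebraicClosure K)))

/-- `Q` is a key polynomial (of level `δ(Q)`) for the valuation `ν` (with fixed extension
`ν̄` to `K̄[x]`): `Q` is monic and `δ(f) ≥ δ(Q) → deg f ≥ deg Q` for every nonzero `f`. -/
def IsKeyPoly (wbar : ValOn (Polynomial (AlgebraicClosure K)) Γ) (Q : Polynomial K) : Prop :=
  Q.Monic ∧ ∀ f : Polynomial K, f ≠ 0 → delta wbar Q ≤ delta wbar f → Q.degree ≤ f.degree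

/-- `Ψ_n`: the set of key polynomials of degree `n`. -/
def Psi (wbar : ValOn (Polynomial (AlgebraicClosure K)) Γ) (n : ℕ) : Set (Polynomial K) :=
  {Q | IsKeyPoly wbar Q ∧ Q.natDegree = n}

/-- The set `K_n = {f : ν_Q(f) < ν(f) for all Q ∈ Ψ_n}`. -/
def LimitSet (w : ValOn (Polynomial K) Γ) (wbar : ValOn (Polynomial (AlgebraicClosure K)) Γ)
    (n : ℕ) : Set (Polynomial K) :=
  {f | ∀ Q ∈ Psi wbar n, truncVal w Q f < w.v f}

/-- A limit key polynomial for `Ψ_n`: a monic polynomial in `K_n` of least degree. -/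
def IsLimitKeyPoly (w : ValOn (Polynomial K) Γ)
    (wbar : ValOn (Polynomial (AlgebraicClosure K)) Γ) (n : ℕ) (Qn : Polynomial K) : Prop :=
  Qn.Monic ∧ Qn ∈ LimitSet w wbar n ∧ ∀ g ∈ LimitSet w wbar n, Qn.degree ≤ g.degree

/-- `g` is `𝔳`-stable for the family `𝔳 = (ν_Q)_{Q ∈ Ψ_n}`, ordered by `Q ⪯ Q' ↔ ν_Q ≤ ν_{Q'}`. -/
def PsiStable (w : ValOn (Polynomial K) Γ) (wbar : ValOn (Polynomial (AlgebraicClosure K)) Γ)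
    (n : ℕ) (g : Polynomial K) : Prop :=
  ∃ Q ∈ Psi wbar n, ∀ Q' ∈ Psi wbar n,
    (∀ h : Polynomial K, truncVal w Q h ≤ truncVal w Q' h) → truncVal w Q' g = truncVal w Q g

/-- `v` is a Krull valuation: its support is trivial. -/
def IsKrullVal (v : Polynomial K → WithTop Γ) : Prop :=
  ∀ f : Polynomial K, f ≠ 0 → v f ≠ ⊤

/-- The quotient group `v(K[x])/ν₀K` is a torsion group: every value of `v` has a positive
multiple lying in the value group of `ν₀`. -/
def TorsionOverBase (ν₀ : ValOn K Γ) (v : Polynomial K → WithTop Γ) : Prop :=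
  ∀ f : Polynomial K, f ≠ 0 → ∃ m : ℕ, 0 < m ∧ ∃ a : K, a ≠ 0 ∧ m • v f = ν₀.v a

/-- `v` (a valuation on `K[x]` extending `ν₀`) is residue-transcendental: it is Krull and the
residue field extension `K(x)v ∣ Kν₀` is transcendental, i.e. there are `f, g` with
`v f = v g` whose residue `res(f/g)` is transcendental over `Kν₀`: every polynomial over
`Kν₀` (with coefficients `res(c_i)`, not all zero) does not vanish at `res(f/g)`. -/
def ResidueTranscendental (ν₀ : ValOn K Γ) (v : Polynomial K → WithTop Γ) : Prop :=
  IsKrullVal v ∧ ∃ f g : Polynomial K, f ≠ 0 ∧ g ≠ 0 ∧ v f = v g ∧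
    ∀ (n : ℕ) (c : ℕ → K), (∀ i, 0 ≤ ν₀.v (c i)) → (∃ i, i ≤ n ∧ ν₀.v (c i) = 0) →
      v (∑ i ∈ Finset.range (n + 1), Polynomial.C (c i) * f ^ i * g ^ (n - i)) = v (g ^ n)

/-- `v` is value-transcendental: it is not Krull, or `v(K[x])/ν₀K` is not torsion. -/
def ValueTranscendental (ν₀ : ValOn K Γ) (v : Polynomial K → WithTop Γ) : Prop :=
  ¬ IsKrullVal v ∨ ¬ TorsionOverBase ν₀ v

/-- `v` is valuation-transcendental. -/
def ValuationTranscendental (ν₀ : ValOn K Γ) (v : Polynomial K → WithTop Γ) : Prop :=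
  ValueTranscendental ν₀ v ∨ ResidueTranscendental ν₀ v

/-- `v` is valuation-algebraic. -/
def ValuationAlgebraic (ν₀ : ValOn K Γ) (v : Polynomial K → WithTop Γ) : Prop :=
  ¬ ValuationTranscendental ν₀ v

end PolyDefs

section AuxLemmas

namespace ValOn

variable {R : Type*} [CommRing R] {Γ : Type*} [AddCommGroup Γ] [LinearOrder Γ] [IsOrderedAddMonoid Γ]

theorem v_add_le_left (w : ValOn R Γ) (a b : R) : w.v (a + b) ≤ w.v a ∨ w.v b ≤ w.v a := by
  by_contra hcon
  push_neg at hcon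
  obtain ⟨h1, h2⟩ := hcon
  have h3 : w.v a < min (w.v (a + b)) (w.v (-b)) := by
    rw [w.v_neg]; exact lt_min h1 h2
  have h4 : min (w.v (a + b)) (w.v (-b)) ≤ w.v a := by
    have : a + b + -b = a := by ring
    calc min (w.v (a + b)) (w.v (-b)) ≤ w.v (a + b + -b) := w.min_le_v_add _ _
      _ = w.v a := by rw [this]
  exact absurd (h3.trans_le h4) (lt_irrefl _)

theorem v_add_eq_left (w : ValOn R Γ) {a b : R} (h : w.v a < w.v b) :
    w.v (a + b) = w.v a := by
  refine le_antisymm ?_ (le_trans (le_min le_rfl h.le) (w.min_le_v_add a b))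
  rcases w.v_add_le_left a b with h1 | h1
  · exact h1
  · exact absurd (h.trans_le h1) (lt_irrefl _)

theorem v_add_eq_min (w : ValOn R Γ) {a b : R} (h : w.v a ≠ w.v b) :
    w.v (a + b) = min (w.v a) (w.v b) := by
  rcases h.lt_or_gt with hl | hl
  · rw [w.v_add_eq_left hl, min_eq_left hl.le]
  · rw [add_comm, w.v_add_eq_left hl, min_eq_right hl.le]

theorem v_add_right_top (w : ValOn R Γ) {a b : R} (hb : w.v b = ⊤) :
    w.v (a + b) = w.v a := by
  rcases eq_or_ne (w.v a) ⊤ with ha | ha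
  · rw [ha, eq_top_iff]
    refine le_trans ?_ (w.min_le_v_add a b)
    rw [ha, hb]
    exact le_top
  · exact w.v_add_eq_left (hb ▸ lt_top_iff_ne_top.mpr ha)

theorem initialForm_top (w : ValOn R Γ) {f : R} (h : w.v f = ⊤) :
    initialForm w f = 0 := dif_pos h

theorem initialForm_congr (w : ValOn R Γ) {f g : R} (hv : w.v f = w.v g)
    (hsub : w.v f < w.v (f - g)) : initialForm w f = initialForm w g := by
  classical
  have hf : w.v f ≠ ⊤ := fun h => by rw [h] at hsub; exact absurd hsub not_top_lt
  have hg : w.v g ≠ ⊤ := hv ▸ hf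
  rw [initialForm, dif_neg hf, initialForm, dif_neg hg]
  rw [Ideal.Quotient.mk_eq_mk_iff_sub_mem]
  have huntop : (w.v g).untop hg = (w.v f).untop hf := by
    rw [← WithTop.coe_inj, WithTop.coe_untop, WithTop.coe_untop, hv]
  intro γ0
  show (γ0 : WithTop Γ) < w.v ((AddMonoidAlgebra.single ((w.v f).untop hf) f
      - AddMonoidAlgebra.single ((w.v g).untop hg) g).coeff γ0)
  rw [huntop, ← AddMonoidAlgebra.single_sub, AddMonoidAlgebra.coeff_single_apply]
  split_ifs with hh
  · calc ((γ0 : WithTop Γ)) = w.v f := by rw [← hh, WithTop.coe_untop]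
      _ < w.v (f - g) := hsub
  · rw [w.v_zero]; exact WithTop.coe_lt_top _

theorem initialForm_eq_mk (w : ValOn R Γ) {f : R} {γ0 : Γ} (h : w.v f = (γ0 : WithTop Γ))
    (hmem : ∀ γ : Γ, (γ : WithTop Γ) ≤ w.v ((AddMonoidAlgebra.single γ0 f).coeff γ)) :
    initialForm w f = Ideal.Quotient.mk (gradedIdeal w)
      ⟨AddMonoidAlgebra.single γ0 f, hmem⟩ := by
  classical
  have hf : w.v f ≠ ⊤ := by rw [h]; exact WithTop.coe_ne_top
  rw [initialForm, dif_neg hf]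
  congr 1
  apply Subtype.ext
  show AddMonoidAlgebra.single ((w.v f).untop hf) f = AddMonoidAlgebra.single γ0 f
  have : (w.v f).untop hf = γ0 := by
    rw [← WithTop.coe_inj, WithTop.coe_untop, h]
  rw [this]

theorem mem_gradedCarrier_single (w : ValOn R Γ) {f : R} {γ0 : Γ}
    (h : (γ0 : WithTop Γ) ≤ w.v f) :
    ∀ γ : Γ, (γ : WithTop Γ) ≤ w.v ((AddMonoidAlgebra.single γ0 f).coeff γ) := by
  classical
  intro γ
  rw [AddMonoidAlgebra.coeff_single_apply]
  split_ifs with hh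
  · exact hh ▸ h
  · rw [w.v_zero]; exact le_top

theorem phi_mk (w₁ w₂ : ValOn R Γ) (h : ∀ f, w₁.v f ≤ w₂.v f) (s : gradedCarrier w₁) :
    phi w₁ w₂ h (Ideal.Quotient.mk (gradedIdeal w₁) s) =
      Ideal.Quotient.mk (gradedIdeal w₂) (Subring.inclusion (gradedCarrier_mono h) s) :=
  Ideal.Quotient.lift_mk _ _ _

theorem phi_initialForm (w₁ w₂ : ValOn R Γ) (h : ∀ f, w₁.v f ≤ w₂.v f) (f : R)
    (heq : w₁.v f = w₂.v f) :
    phi w₁ w₂ h (initialForm w₁ f) = initialForm w₂ f := by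
  classical
  by_cases hf : w₁.v f = ⊤
  · rw [initialForm_top _ hf, map_zero, initialForm_top _ (heq ▸ hf)]
  · have hf2 : w₂.v f ≠ ⊤ := heq ▸ hf
    rw [initialForm, dif_neg hf, initialForm, dif_neg hf2, phi_mk]
    congr 1
    apply Subtype.ext
    show AddMonoidAlgebra.single ((w₁.v f).untop hf) f =
      AddMonoidAlgebra.single ((w₂.v f).untop hf2) f
    have : (w₁.v f).untop hf = (w₂.v f).untop hf2 := by
      rw [← WithTop.coe_inj, WithTop.coe_untop, WithTop.coe_untop, heq]
    rw [this]

end ValOn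

open ValOn

theorem aux_inf'_range_succ {Γ : Type*} [LinearOrder Γ] (r : ℕ) (F : ℕ → Γ) :
    (Finset.range (r + 1 + 1)).inf' Finset.nonempty_range_add_one F =
      min (F 0) ((Finset.range (r + 1)).inf' Finset.nonempty_range_add_one (fun k => F (k + 1))) := by
  apply le_antisymm
  · refine le_min (Finset.inf'_le _ (by simp)) ?_
    refine Finset.le_inf' _ _ fun k hk => ?_
    refine Finset.inf'_le _ ?_
    simp only [Finset.mem_range] at hk ⊢
    omega
  · refine Finset.le_inf' _ _ fun j hj => ?_
    cases j with
    | zero => exact min_le_left _ _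
    | succ k =>
        refine le_trans (min_le_right _ _) (Finset.inf'_le _ ?_)
        simp only [Finset.mem_range] at hj ⊢
        omega

theorem aux_inf'_add_const {Γ : Type*} [AddCommGroup Γ] [LinearOrder Γ] [IsOrderedAddMonoid Γ] {α : Type*}
    (s : Finset α) (H : s.Nonempty) (F : α → WithTop Γ) (c : WithTop Γ) :
    s.inf' H F + c = s.inf' H (fun x => F x + c) := by
  have hmono : Monotone (fun x : WithTop Γ => x + c) := fun a b hab => add_le_add_left hab c
  exact Finset.apply_inf'_eq_inf'_comp H (fun x : WithTop Γ => x + c)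
    (fun x y => by exact hmono.map_min)

theorem aux_exists_expansion {K : Type*} [Field K] (Q : Polynomial K) (hQmonic : Q.Monic)
    (hQd : 0 < Q.natDegree) (f : Polynomial K) :
    ∃ (r : ℕ) (b : ℕ → Polynomial K), (∀ k, (b k).degree < Q.degree) ∧
      f = ∑ j ∈ Finset.range (r + 1), b j * Q ^ j := by
  have hQ0 : Q ≠ 0 := hQmonic.ne_zero
  have hbot : (⊥ : WithBot ℕ) < Q.degree :=
    bot_lt_iff_ne_bot.mpr (by simpa [Polynomial.degree_eq_bot] using hQ0)
  suffices H : ∀ (n : ℕ) (f : Polynomial K), f.natDegree ≤ n →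
      ∃ (r : ℕ) (b : ℕ → Polynomial K), (∀ k, (b k).degree < Q.degree) ∧
        f = ∑ j ∈ Finset.range (r + 1), b j * Q ^ j by
    exact H f.natDegree f le_rfl
  intro n
  induction n using Nat.strong_induction_on with
  | _ n IH =>
    intro f hn
    by_cases hfd : f.degree < Q.degree
    · refine ⟨0, fun k => if k = 0 then f else 0, fun k => ?_, by simp⟩
      by_cases h : k = 0
      · simpa [h] using hfd
      · simpa [h] using hbot
    · have hfQle : Q.degree ≤ f.degree := not_lt.mp hfd
      have hf0 : f ≠ 0 := by
        intro h
        rw [h, Polynomial.degree_zero] at hfQle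
        exact absurd (hfQle.trans_lt hbot) (lt_irrefl _)
      have hndQ : Q.natDegree ≤ f.natDegree := Polynomial.natDegree_le_natDegree hfQle
      have hgdeg : (f /ₘ Q).natDegree < f.natDegree := by
        rw [Polynomial.natDegree_divByMonic f hQmonic]
        omega
      have hfn : 0 < f.natDegree := lt_of_lt_of_le hQd hndQ
      have hgle : (f /ₘ Q).natDegree ≤ f.natDegree - 1 := by omega
      obtain ⟨r, b, hb, hexp⟩ := IH (f.natDegree - 1) (by omega) (f /ₘ Q) hgle
      refine ⟨r + 1, fun j => Nat.rec (f %ₘ Q) (fun k _ => b k) j, fun k => ?_, ?_⟩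
      · cases k with
        | zero => exact Polynomial.degree_modByMonic_lt f hQmonic
        | succ k => exact hb k
      · rw [Finset.sum_range_succ']
        show f = (∑ j ∈ Finset.range (r + 1), b j * Q ^ (j + 1)) + (f %ₘ Q) * Q ^ 0
        rw [pow_zero, mul_one]
        have hQs : ∑ j ∈ Finset.range (r + 1), b j * Q ^ (j + 1) =
            Q * ∑ j ∈ Finset.range (r + 1), b j * Q ^ j := by
          rw [Finset.mul_sum]
          refine Finset.sum_congr rfl fun j _ => ?_
          rw [pow_succ]; ring
        rw [hQs, ← hexp, add_comm, Polynomial.modByMonic_add_div f Q]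

end AuxLemmas

set_option maxHeartbeats 2000000 in
set_option synthInstance.maxHeartbeats 1000000 in
/-- In the third case, `lim→ G_{ν_i} ≅ R_Q`, where `R_Q` is the
additive subgroup of `G_μ` generated by `{inv_μ(f) : deg f < d = deg Q}` (a subring of
`G_μ`, since `Q` is a key polynomial for `μ`). -/
theorem directLimit_iso_RQ
    {K : Type*} [Field K] {Γ : Type*} [AddCommGroup Γ] [LinearOrder Γ] [IsOrderedAddMonoid Γ]
    {I : Type*} [LinearOrder I] [Nonempty I]
    (ν₀ : ValOn K Γ) (ν : I → ValOn (Polynomial K) Γ)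
    (hext : ∀ (i : I) (a : K), (ν i).v (Polynomial.C a) = ν₀.v a)
    (hmono : ∀ i j : I, i ≤ j → ∀ f : Polynomial K, (ν i).v f ≤ (ν j).v f)
    (hstrict : ∀ i j : I, i < j → ∃ f : Polynomial K, (ν i).v f < (ν j).v f)
    (hnomax : ∀ i : I, ∃ j : I, i < j)
    (Q : Polynomial K) (hQmonic : Q.Monic) (hQns : ¬ Stable ν Q)
    (hQmin : ∀ g : Polynomial K, ¬ Stable ν g → Q.degree ≤ g.degree)
    (γ : WithTop Γ) (hγ : ∀ i : I, (ν i).v Q < γ)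
    (μ : ValOn (Polynomial K) Γ)
    (hμext : ∀ a : K, μ.v (Polynomial.C a) = ν₀.v a)
    (hμ : ∀ (f : Polynomial K) (r : ℕ) (c : ℕ → Polynomial K),
      f = ∑ j ∈ Finset.range (r + 1), c j * Q ^ j →
      (∀ j : ℕ, (c j).degree < Q.degree) →
      ∃ i₀ : I, ∀ i : I, i₀ ≤ i →
        μ.v f = (Finset.range (r + 1)).inf' Finset.nonempty_range_add_one
          (fun j => (ν i).v (c j) + j • γ)) :
    ∃ S : Subring (Graded μ),
      (S : Set (Graded μ)) =
        ↑(AddSubgroup.closure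
          {x : Graded μ | ∃ f : Polynomial K, f.degree < Q.degree ∧ x = initialForm μ f}) ∧
      Nonempty ((Ring.DirectLimit (fun i => Graded (ν i))
        (fun i j h => ⇑(phi (ν i) (ν j) (hmono i j h)))) ≃+* S) := by
  classical
  -- ## Basic facts
  have hQ0 : Q ≠ 0 := hQmonic.ne_zero
  have hd : 0 < Q.natDegree := by
    rcases Nat.eq_zero_or_pos Q.natDegree with h0 | h0
    · exfalso
      have hQ1 : Q = 1 := (Polynomial.Monic.natDegree_eq_zero hQmonic).mp h0
      exact hQns ⟨Classical.arbitrary I, fun j _ => by rw [hQ1, (ν j).v_one, (ν _).v_one]⟩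
    · exact h0
  have hbot : (⊥ : WithBot ℕ) < Q.degree :=
    bot_lt_iff_ne_bot.mpr (by simpa [Polynomial.degree_eq_bot] using hQ0)
  have hνQtop : ∀ i, (ν i).v Q ≠ ⊤ := fun i => ne_top_of_lt (hγ i)
  have hunstab : ∀ f : Polynomial K, ¬ Stable ν f → ∀ i : I, ∃ j, i ≤ j ∧
      (ν i).v f < (ν j).v f := by
    intro f hf i
    rw [Stable] at hf
    push_neg at hf
    obtain ⟨j, hij, hne⟩ := hf i
    exact ⟨j, hij, lt_of_le_of_ne (hmono i j hij f) (Ne.symm hne)⟩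
  have hexp := aux_exists_expansion Q hQmonic hd
  -- ## `μ` on polynomials of degree `< deg Q`
  have hmu_low : ∀ f : Polynomial K, f.degree < Q.degree →
      ∃ i₀ : I, ∀ i, i₀ ≤ i → μ.v f = (ν i).v f := by
    intro f hf
    have hdegs : ∀ j : ℕ, (if j = 0 then f else 0 : Polynomial K).degree < Q.degree := by
      intro j
      by_cases h : j = 0
      · simpa [h] using hf
      · simpa [h] using hbot
    obtain ⟨i₀, h⟩ := hμ f 0 (fun k => if k = 0 then f else 0) (by simp) hdegs
    refine ⟨i₀, fun i hi => ?_⟩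
    have h2 := h i hi
    simpa [zero_nsmul] using h2
  -- ## `μ Q = γ`
  have hμQ : μ.v Q = γ := by
    have hdegs : ∀ j : ℕ, (if j = 1 then (1 : Polynomial K) else 0).degree < Q.degree := by
      intro j
      by_cases h : j = 1
      · rw [if_pos h, Polynomial.degree_one]
        exact Polynomial.natDegree_pos_iff_degree_pos.mp hd
      · simpa [h] using hbot
    have hsum : Q = ∑ j ∈ Finset.range (1 + 1),
        (if j = 1 then (1 : Polynomial K) else 0) * Q ^ j := by
      simp [Finset.sum_range_succ]
    obtain ⟨i₀, h⟩ := hμ Q 1 _ hsum hdegs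
    have h2 := h i₀ le_rfl
    rw [h2]
    apply le_antisymm
    · refine le_trans (Finset.inf'_le _ (by simp : (1 : ℕ) ∈ Finset.range (1 + 1))) ?_
      simp [(ν i₀).v_one, one_nsmul]
    · refine Finset.le_inf' _ _ fun j hj => ?_
      simp only [Finset.mem_range] at hj
      interval_cases j
      · simp [(ν i₀).v_zero]
      · simp [(ν i₀).v_one, one_nsmul]
  -- ## recursion formula for `μ`
  have hmu_rec : ∀ c0 g : Polynomial K, c0.degree < Q.degree →
      μ.v (c0 + Q * g) = min (μ.v c0) (γ + μ.v g) := by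
    intro c0 g hc0
    obtain ⟨r, b, hb, hgexp⟩ := hexp g
    obtain ⟨c, hc0', hcsucc⟩ : ∃ c : ℕ → Polynomial K, c 0 = c0 ∧ ∀ k, c (k + 1) = b k :=
      ⟨fun j => Nat.rec c0 (fun k _ => b k) j, rfl, fun k => rfl⟩
    have hcdeg : ∀ j, (c j).degree < Q.degree := by
      intro j
      cases j with
      | zero => rw [hc0']; exact hc0
      | succ k => rw [hcsucc]; exact hb k
    have hfexp : c0 + Q * g = ∑ j ∈ Finset.range (r + 1 + 1), c j * Q ^ j := by
      rw [Finset.sum_range_succ']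
      simp only [hcsucc, hc0', pow_zero, mul_one]
      have hQs : ∑ j ∈ Finset.range (r + 1), b j * Q ^ (j + 1) =
          Q * ∑ j ∈ Finset.range (r + 1), b j * Q ^ j := by
        rw [Finset.mul_sum]
        exact Finset.sum_congr rfl fun j _ => by rw [pow_succ]; ring
      rw [hQs, ← hgexp, add_comm]
    obtain ⟨i₀, h₀⟩ := hμ (c0 + Q * g) (r + 1) c hfexp hcdeg
    obtain ⟨i₁, h₁⟩ := hμ g r b hgexp hb
    obtain ⟨i₂, h₂⟩ := hmu_low c0 hc0
    have e0 := h₀ (max i₀ (max i₁ i₂)) (le_max_left _ _)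
    have e1 := h₁ (max i₀ (max i₁ i₂)) ((le_max_left i₁ i₂).trans (le_max_right _ _))
    have e2 := h₂ (max i₀ (max i₁ i₂)) ((le_max_right i₁ i₂).trans (le_max_right _ _))
    refine e0.trans ?_
    rw [aux_inf'_range_succ]
    congr 1
    · simp only [hc0', zero_nsmul, add_zero, ← e2]
    · rw [add_comm γ (μ.v g), e1, aux_inf'_add_const]
      refine Finset.inf'_congr Finset.nonempty_range_add_one rfl fun k _ => ?_
      simp only [hcsucc, succ_nsmul, ← add_assoc]
  -- ## `ν i ≤ μ` for polynomials of degree `< deg Q`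
  have hC_low : ∀ f : Polynomial K, f.degree < Q.degree → ∀ i, (ν i).v f ≤ μ.v f := by
    intro f hf i
    obtain ⟨i₀, h⟩ := hmu_low f hf
    have h2 := h (max i i₀) (le_max_right _ _)
    rw [h2]
    exact hmono i _ (le_max_left _ _) f
  -- ## `ν j Q + ν j g` cannot be eventually constant  (< ⊤)
  have no_const : ∀ (g : Polynomial K) (v0 : WithTop Γ) (i' : I), v0 ≠ ⊤ →
      (∀ j, i' ≤ j → (ν j).v Q + (ν j).v g = v0) → False := by
    intro g v0 i' hv0 hconst
    obtain ⟨j, hij, hQlt⟩ := hunstab Q hQns i'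
    have h1 : (ν i').v Q + (ν i').v g = v0 := hconst i' le_rfl
    have h2 : (ν j).v Q + (ν j).v g = v0 := hconst j hij
    have hgtop : (ν i').v g ≠ ⊤ := by
      intro h
      rw [h, add_top] at h1
      exact hv0 h1.symm
    have hlt : (ν i').v Q + (ν i').v g < (ν j).v Q + (ν j).v g :=
      WithTop.add_lt_add_of_lt_of_le hgtop hQlt (hmono i' j hij g)
    rw [h1, h2] at hlt
    exact lt_irrefl _ hlt
  -- ## `ν i ≤ μ` in general
  have hC : ∀ (f : Polynomial K) (i : I), (ν i).v f ≤ μ.v f := by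
    suffices H : ∀ (n : ℕ) (f : Polynomial K), f.natDegree ≤ n → ∀ i, (ν i).v f ≤ μ.v f by
      exact fun f i => H f.natDegree f le_rfl i
    intro n
    induction n using Nat.strong_induction_on with
    | _ n IH =>
      intro f hn i
      by_cases hfd : f.degree < Q.degree
      · exact hC_low f hfd i
      · have hfQle : Q.degree ≤ f.degree := not_lt.mp hfd
        have hndQ : Q.natDegree ≤ f.natDegree := Polynomial.natDegree_le_natDegree hfQle
        have hfnpos : 0 < f.natDegree := lt_of_lt_of_le hd hndQ
        have hfeq : f = f %ₘ Q + Q * (f /ₘ Q) := (Polynomial.modByMonic_add_div f Q).symm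
        have hc0 : (f %ₘ Q).degree < Q.degree := Polynomial.degree_modByMonic_lt f hQmonic
        have hgd : (f /ₘ Q).natDegree < n := by
          have hnd := Polynomial.natDegree_divByMonic f hQmonic
          omega
        have IHg : ∀ j, (ν j).v (f /ₘ Q) ≤ μ.v (f /ₘ Q) :=
          fun j => IH (f /ₘ Q).natDegree hgd (f /ₘ Q) le_rfl j
        have hrec : μ.v f = min (μ.v (f %ₘ Q)) (γ + μ.v (f /ₘ Q)) := by
          conv_lhs => rw [hfeq]
          exact hmu_rec _ _ hc0
        by_cases hex : ∃ j, i ≤ j ∧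
            ((ν j).v (f %ₘ Q) ≠ (ν j).v (Q * (f /ₘ Q)) ∨ (ν j).v (Q * (f /ₘ Q)) = ⊤)
        · obtain ⟨j, hij, hcase⟩ := hex
          have hile : (ν i).v f ≤ (ν j).v f := hmono i j hij f
          rcases hcase with hne | htop
          · have hfj : (ν j).v f = min ((ν j).v (f %ₘ Q)) ((ν j).v (Q * (f /ₘ Q))) := by
              conv_lhs => rw [hfeq]
              exact (ν j).v_add_eq_min hne
            rw [hrec]
            refine hile.trans ?_
            rw [hfj]
            refine min_le_min (hC_low _ hc0 j) ?_
            rw [(ν j).v_mul]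
            exact add_le_add (hγ j).le (IHg j)
          · have hgtop : (ν j).v (f /ₘ Q) = ⊤ := by
              rw [(ν j).v_mul] at htop
              rcases WithTop.add_eq_top.mp htop with h | h
              · exact absurd h (hνQtop j)
              · exact h
            have hμg : γ + μ.v (f /ₘ Q) = ⊤ := by
              have hg2 : μ.v (f /ₘ Q) = ⊤ := top_le_iff.mp (hgtop ▸ IHg j)
              rw [hg2, add_top]
            have hfj : (ν j).v f = (ν j).v (f %ₘ Q) := by
              conv_lhs => rw [hfeq]
              exact (ν j).v_add_right_top htop
            rw [hrec, hμg]
            refine hile.trans ?_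
            rw [hfj]
            exact le_min (hC_low _ hc0 j) le_top
        · push_neg at hex
          exfalso
          obtain ⟨i₂, h₂⟩ := hmu_low (f %ₘ Q) hc0
          refine no_const (f /ₘ Q) (μ.v (f %ₘ Q)) (max i i₂) ?_ ?_
          · intro htop
            have h1 := (hex (max i i₂) (le_max_left _ _)).1
            have h2' := h₂ (max i i₂) (le_max_right _ _)
            exact (hex (max i i₂) (le_max_left _ _)).2 (by rw [← h1, ← h2', htop])
          · intro j hj
            have hj1 : i ≤ j := (le_max_left i i₂).trans hj
            have hj2 : i₂ ≤ j := (le_max_right i i₂).trans hj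
            rw [← (ν j).v_mul, ← (hex j hj1).1]
            exact (h₂ j hj2).symm
  -- ## stable polynomials attain their stable value under `μ`
  have hF : ∀ (f : Polynomial K) (i₀ : I), (∀ j, i₀ ≤ j → (ν j).v f = (ν i₀).v f) →
      μ.v f = (ν i₀).v f := by
    intro f i₀ hstab
    refine le_antisymm ?_ (hC f i₀)
    by_contra hcon
    push_neg at hcon
    have hftop : (ν i₀).v f ≠ ⊤ := ne_top_of_lt hcon
    by_cases hfd : f.degree < Q.degree
    · obtain ⟨i₁, h₁⟩ := hmu_low f hfd
      have h2 := h₁ (max i₀ i₁) (le_max_right _ _)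
      rw [h2, hstab _ (le_max_left _ _)] at hcon
      exact lt_irrefl _ hcon
    · have hfeq : f = f %ₘ Q + Q * (f /ₘ Q) := (Polynomial.modByMonic_add_div f Q).symm
      have hc0 : (f %ₘ Q).degree < Q.degree := Polynomial.degree_modByMonic_lt f hQmonic
      have hrec : μ.v f = min (μ.v (f %ₘ Q)) (γ + μ.v (f /ₘ Q)) := by
        conv_lhs => rw [hfeq]
        exact hmu_rec _ _ hc0
      have hμc0 : (ν i₀).v f < μ.v (f %ₘ Q) :=
        lt_of_lt_of_le hcon (by rw [hrec]; exact min_le_left _ _)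
      obtain ⟨i₂, h₂⟩ := hmu_low (f %ₘ Q) hc0
      refine no_const (f /ₘ Q) ((ν i₀).v f) (max i₀ i₂) hftop ?_
      intro j hj
      have hj0 : i₀ ≤ j := (le_max_left _ _).trans hj
      have hj2 : i₂ ≤ j := (le_max_right _ _).trans hj
      have hclt : (ν j).v f < (ν j).v (f %ₘ Q) := by
        rw [hstab j hj0, ← h₂ j hj2]
        exact hμc0
      have hQg : Q * (f /ₘ Q) = f + -(f %ₘ Q) := by
        have h := Polynomial.modByMonic_add_div f Q
        linear_combination h
      have hvQg : (ν j).v (Q * (f /ₘ Q)) = (ν j).v f := by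
        rw [hQg]
        exact (ν j).v_add_eq_left (by rw [(ν j).v_neg]; exact hclt)
      rw [← (ν j).v_mul, hvQg, hstab j hj0]
  -- ## values below `μ f` are eventually exceeded
  have hE : ∀ (f : Polynomial K) (i : I) (γ0 : Γ), (γ0 : WithTop Γ) ≤ (ν i).v f →
      (γ0 : WithTop Γ) < μ.v f → ∃ j, i ≤ j ∧ (γ0 : WithTop Γ) < (ν j).v f := by
    intro f i γ0 hle hlt
    by_cases hs : Stable ν f
    · obtain ⟨i₀, h₀⟩ := hs
      have hμf : μ.v f = (ν i₀).v f := hF f i₀ h₀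
      refine ⟨max i i₀, le_max_left _ _, ?_⟩
      rw [h₀ (max i i₀) (le_max_right _ _), ← hμf]
      exact hlt
    · obtain ⟨j, hij, h⟩ := hunstab f hs i
      exact ⟨j, hij, lt_of_le_of_lt hle h⟩
  -- ## initial forms of stable polynomials come from low degrees
  have hG : ∀ (f : Polynomial K) (i : I), (ν i).v f = μ.v f → μ.v f ≠ ⊤ →
      ∃ c0 : Polynomial K, c0.degree < Q.degree ∧ initialForm μ f = initialForm μ c0 := by
    intro f i hvi hμtop
    by_cases hfd : f.degree < Q.degree
    · exact ⟨f, hfd, rfl⟩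
    · have hfeq : f = f %ₘ Q + Q * (f /ₘ Q) := (Polynomial.modByMonic_add_div f Q).symm
      have hc0 : (f %ₘ Q).degree < Q.degree := Polynomial.degree_modByMonic_lt f hQmonic
      have hrec : μ.v f = min (μ.v (f %ₘ Q)) (γ + μ.v (f /ₘ Q)) := by
        conv_lhs => rw [hfeq]
        exact hmu_rec _ _ hc0
      have hstabf : ∀ j, i ≤ j → (ν j).v f = μ.v f := fun j hj =>
        le_antisymm (hC f j) (hvi ▸ hmono i j hj f)
      have hlt : μ.v f < γ + μ.v (f /ₘ Q) := by
        rcases lt_or_ge (μ.v f) (γ + μ.v (f /ₘ Q)) with h | h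
        · exact h
        · exfalso
          have heq : μ.v f = γ + μ.v (f /ₘ Q) :=
            le_antisymm (by rw [hrec]; exact min_le_right _ _) h
          have hgtop : μ.v (f /ₘ Q) ≠ ⊤ := fun hh => hμtop (by rw [heq, hh, add_top])
          obtain ⟨i₂, h₂⟩ := hmu_low (f %ₘ Q) hc0
          have hj1 : i ≤ max i i₂ := le_max_left _ _
          have hj2 : i₂ ≤ max i i₂ := le_max_right _ _
          have hQg_lt : (ν (max i i₂)).v (Q * (f /ₘ Q)) < μ.v f := by
            rw [(ν _).v_mul, heq]
            refine WithTop.add_lt_add_of_lt_of_le ?_ (hγ _) (hC _ _)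
            intro hh
            exact hgtop (top_le_iff.mp (hh ▸ hC (f /ₘ Q) (max i i₂)))
          have hc0_ge : μ.v f ≤ (ν (max i i₂)).v (f %ₘ Q) := by
            rw [← h₂ _ hj2, hrec]
            exact min_le_left _ _
          have hfj : (ν (max i i₂)).v f = (ν (max i i₂)).v (Q * (f /ₘ Q)) := by
            conv_lhs => rw [hfeq, add_comm (f %ₘ Q) (Q * (f /ₘ Q))]
            exact (ν _).v_add_eq_left (lt_of_lt_of_le hQg_lt hc0_ge)
          rw [hstabf _ hj1] at hfj
          rw [← hfj] at hQg_lt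
          exact lt_irrefl _ hQg_lt
      have hμc0 : μ.v f = μ.v (f %ₘ Q) := by
        rcases min_cases (μ.v (f %ₘ Q)) (γ + μ.v (f /ₘ Q)) with ⟨h1, _⟩ | ⟨h1, _⟩
        · rw [hrec, h1]
        · rw [hrec, h1] at hlt
          exact absurd hlt (lt_irrefl _)
      refine ⟨f %ₘ Q, hc0, ?_⟩
      apply initialForm_congr
      · exact hμc0
      · have hsub : f - f %ₘ Q = Q * (f /ₘ Q) := by
          have h := Polynomial.modByMonic_add_div f Q
          linear_combination -h
        rw [hsub, μ.v_mul, hμQ]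
        exact hlt
  -- ## the directed system of graded rings and the limit map
  have hCν : ∀ i : I, ∀ f : Polynomial K, (ν i).v f ≤ μ.v f := fun i f => hC f i
  haveI hDS : DirectedSystem (fun i => Graded (ν i))
      (fun i j h => ⇑(phi (ν i) (ν j) (hmono i j h))) := by
    constructor
    · intro i x
      obtain ⟨s, rfl⟩ := Ideal.Quotient.mk_surjective x
      rw [phi_mk]
      exact congrArg _ (Subtype.ext rfl)
    · intro k j i hij hjk x
      obtain ⟨s, rfl⟩ := Ideal.Quotient.mk_surjective x
      rw [phi_mk, phi_mk, phi_mk]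
      exact congrArg _ (Subtype.ext rfl)
  have hcompat : ∀ (i j : I) (hij : i ≤ j) (x : Graded (ν i)),
      phi (ν j) μ (hCν j) (phi (ν i) (ν j) (hmono i j hij) x) = phi (ν i) μ (hCν i) x := by
    intro i j hij x
    obtain ⟨s, rfl⟩ := Ideal.Quotient.mk_surjective x
    rw [phi_mk, phi_mk, phi_mk]
    exact congrArg _ (Subtype.ext rfl)
  set Φ : Ring.DirectLimit (fun i => Graded (ν i))
      (fun i j h => ⇑(phi (ν i) (ν j) (hmono i j h))) →+* Graded μ :=
    Ring.DirectLimit.lift _ _ _ (fun i => phi (ν i) μ (hCν i)) hcompat with hΦ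
  -- ## injectivity of `Φ`
  have hinj : Function.Injective Φ := by
    rw [injective_iff_map_eq_zero]
    intro x hx
    obtain ⟨i, a, rfl⟩ := Ring.DirectLimit.exists_of x
    obtain ⟨s, rfl⟩ := Ideal.Quotient.mk_surjective a
    rw [hΦ, Ring.DirectLimit.lift_of, phi_mk, Ideal.Quotient.eq_zero_iff_mem] at hx
    have hx' : ∀ γ0 : Γ, (γ0 : WithTop Γ) <
        μ.v ((s : AddMonoidAlgebra (Polynomial K) Γ).coeff γ0) := hx
    have hchoice : ∀ γ0 ∈ (s : AddMonoidAlgebra (Polynomial K) Γ).coeff.support,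
        ∃ j, i ≤ j ∧ (γ0 : WithTop Γ) <
          (ν j).v ((s : AddMonoidAlgebra (Polynomial K) Γ).coeff γ0) :=
      fun γ0 _ => hE _ i γ0 (s.2 γ0) (hx' γ0)
    choose jf hjf1 hjf2 using hchoice
    have hne : (insert i ((s : AddMonoidAlgebra (Polynomial K) Γ).coeff.support.attach.image
        (fun t => jf t.1 t.2))).Nonempty := ⟨i, Finset.mem_insert_self _ _⟩
    set J := (insert i ((s : AddMonoidAlgebra (Polynomial K) Γ).coeff.support.attach.image
        (fun t => jf t.1 t.2))).max' hne with hJ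
    have hiJ : i ≤ J := Finset.le_max' _ i (Finset.mem_insert_self _ _)
    have hjJ : ∀ (γ0 : Γ) (h : γ0 ∈ (s : AddMonoidAlgebra (Polynomial K) Γ).coeff.support),
        jf γ0 h ≤ J := by
      intro γ0 h
      rw [hJ]
      refine Finset.le_max' _ _ ?_
      refine Finset.mem_insert_of_mem ?_
      exact Finset.mem_image.mpr ⟨⟨γ0, h⟩, Finset.mem_attach _ _, rfl⟩
    have hzero : phi (ν i) (ν J) (hmono i J hiJ) (Ideal.Quotient.mk _ s) = 0 := by
      rw [phi_mk, Ideal.Quotient.eq_zero_iff_mem]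
      intro γ0
      show (γ0 : WithTop Γ) < (ν J).v ((s : AddMonoidAlgebra (Polynomial K) Γ).coeff γ0)
      by_cases hmem : γ0 ∈ (s : AddMonoidAlgebra (Polynomial K) Γ).coeff.support
      · exact lt_of_lt_of_le (hjf2 γ0 hmem) (hmono _ J (hjJ γ0 hmem) _)
      · rw [Finsupp.notMem_support_iff.mp hmem, (ν J).v_zero]
        exact WithTop.coe_lt_top _
    have hofeq : Ring.DirectLimit.of (fun i => Graded (ν i))
        (fun i j h => ⇑(phi (ν i) (ν j) (hmono i j h))) i (Ideal.Quotient.mk _ s) =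
        Ring.DirectLimit.of _ _ J
          (phi (ν i) (ν J) (hmono i J hiJ) (Ideal.Quotient.mk _ s)) :=
      (Ring.DirectLimit.of_f hiJ _).symm
    rw [hofeq, hzero, map_zero]
  -- ## conclusion
  refine ⟨Φ.range, ?_, ⟨RingEquiv.ofBijective Φ.rangeRestrict
    ⟨fun a b hab => hinj (by rw [← Φ.coe_rangeRestrict a, ← Φ.coe_rangeRestrict b, hab]),
      Φ.rangeRestrict_surjective⟩⟩⟩
  apply Set.Subset.antisymm
  · -- range ⊆ closure
    rintro x ⟨y, rfl⟩
    obtain ⟨i, a, rfl⟩ := Ring.DirectLimit.exists_of y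
    obtain ⟨s, rfl⟩ := Ideal.Quotient.mk_surjective a
    rw [hΦ, Ring.DirectLimit.lift_of, phi_mk]
    show Ideal.Quotient.mk (gradedIdeal μ) (Subring.inclusion (gradedCarrier_mono (hCν i)) s) ∈
      AddSubgroup.closure {x : Graded μ | ∃ f : Polynomial K,
        f.degree < Q.degree ∧ x = initialForm μ f}
    have hdecomp : (Subring.inclusion (gradedCarrier_mono (hCν i)) s : gradedCarrier μ) =
        ∑ t ∈ (s : AddMonoidAlgebra (Polynomial K) Γ).coeff.support.attach,
          (⟨AddMonoidAlgebra.single t.1 ((s : AddMonoidAlgebra (Polynomial K) Γ).coeff t.1),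
            mem_gradedCarrier_single μ ((s.2 t.1).trans (hC _ i))⟩ : gradedCarrier μ) := by
      apply Subtype.ext
      rw [AddSubmonoidClass.coe_finset_sum]
      show (s : AddMonoidAlgebra (Polynomial K) Γ) = _
      conv_lhs => rw [← AddMonoidAlgebra.sum_coeff_single (s : AddMonoidAlgebra (Polynomial K) Γ)]
      rw [Finsupp.sum, ← Finset.sum_attach]
    rw [hdecomp, map_sum]
    refine AddSubgroup.sum_mem _ fun t _ => ?_
    by_cases hlt : (t.1 : WithTop Γ) < μ.v ((s : AddMonoidAlgebra (Polynomial K) Γ).coeff t.1)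
    · have hzero : Ideal.Quotient.mk (gradedIdeal μ)
          (⟨AddMonoidAlgebra.single t.1 ((s : AddMonoidAlgebra (Polynomial K) Γ).coeff t.1),
            mem_gradedCarrier_single μ ((s.2 t.1).trans (hC _ i))⟩ : gradedCarrier μ) = 0 := by
        rw [Ideal.Quotient.eq_zero_iff_mem]
        intro γ0
        show (γ0 : WithTop Γ) < μ.v ((AddMonoidAlgebra.single t.1
          ((s : AddMonoidAlgebra (Polynomial K) Γ).coeff t.1)).coeff γ0)
        rw [AddMonoidAlgebra.coeff_single_apply]
        split_ifs with hh
        · exact hh ▸ hlt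
        · rw [μ.v_zero]
          exact WithTop.coe_lt_top _
      rw [hzero]
      exact zero_mem _
    · have hle1 : (t.1 : WithTop Γ) ≤ (ν i).v ((s : AddMonoidAlgebra (Polynomial K) Γ).coeff t.1) :=
        s.2 t.1
      have heqμ : μ.v ((s : AddMonoidAlgebra (Polynomial K) Γ).coeff t.1) = (t.1 : WithTop Γ) :=
        le_antisymm (not_lt.mp hlt) (hle1.trans (hC _ i))
      have hνi : (ν i).v ((s : AddMonoidAlgebra (Polynomial K) Γ).coeff t.1) =
          μ.v ((s : AddMonoidAlgebra (Polynomial K) Γ).coeff t.1) :=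
        le_antisymm (hC _ i) (heqμ ▸ hle1)
      have hμtop : μ.v ((s : AddMonoidAlgebra (Polynomial K) Γ).coeff t.1) ≠ ⊤ := by
        rw [heqμ]
        exact WithTop.coe_ne_top
      obtain ⟨c0, hc0deg, hc0eq⟩ := hG _ i hνi hμtop
      have hterm : Ideal.Quotient.mk (gradedIdeal μ)
          (⟨AddMonoidAlgebra.single t.1 ((s : AddMonoidAlgebra (Polynomial K) Γ).coeff t.1),
            mem_gradedCarrier_single μ ((s.2 t.1).trans (hC _ i))⟩ : gradedCarrier μ) =
          initialForm μ ((s : AddMonoidAlgebra (Polynomial K) Γ).coeff t.1) :=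
        (initialForm_eq_mk μ heqμ _).symm
      rw [hterm, hc0eq]
      exact AddSubgroup.subset_closure ⟨c0, hc0deg, rfl⟩
  · -- closure ⊆ range
    intro x hx
    have hsub : {x : Graded μ | ∃ f : Polynomial K, f.degree < Q.degree ∧
        x = initialForm μ f} ⊆ (Φ.range.toAddSubgroup : Set (Graded μ)) := by
      rintro z ⟨f, hdeg, rfl⟩
      show initialForm μ f ∈ Φ.range
      obtain ⟨i₀, h₀⟩ := hmu_low f hdeg
      by_cases ht : μ.v f = ⊤
      · rw [initialForm_top μ ht]
        exact zero_mem _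
      · refine RingHom.mem_range.mpr ⟨Ring.DirectLimit.of _ _ i₀ (initialForm (ν i₀) f), ?_⟩
        rw [hΦ, Ring.DirectLimit.lift_of]
        exact phi_initialForm _ _ _ f (h₀ i₀ le_rfl).symm
    exact (AddSubgroup.closure_le Φ.range.toAddSubgroup).mpr hsub hx
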